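/- Let A be a finite type with the discrete topology and x : ℤ → A. Then x is repetitive if and only if the orbit closure of x under the shift is minimal, i.e. if and only if for every y in the closure of the shift orbit of x (in the product topology on A^ℤ), the closure of the shift orbit of y equals the closure of the shift orbit of x. -/
import Mathlib


/-- The shift `S` on bi-infinite sequences: `(S x) n = x (n + 1)`. -/
def shiftZ {A : Type*} (x : ℤ → A) : ℤ → A := fun n => x (n + 1)

/-- The shift orbit `{ S^k x | k ∈ ℤ }` of a bi-infinite sequence `x`. -/
def shiftOrbit {A : Type*} (x : ℤ → A) : Set (ℤ → A) :=
  {y | ∃ k : ℤ, y = fun n => x (n + k)}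

/-- A word `w : Fin ℓ → A` occurs in `x : ℤ → A` if there is `n : ℤ` with
`w j = x (n + j)` for all `j < ℓ`. -/
def OccursIn {A : Type*} {ℓ : ℕ} (w : Fin ℓ → A) (x : ℤ → A) : Prop :=
  ∃ n : ℤ, ∀ j : Fin ℓ, w j = x (n + (j : ℕ))

/-- `x` is repetitive: for every `ℓ` there exists `L` such that every length-`ℓ` word
occurring in `x` occurs at some position inside every window of `L` consecutive
positions of `x`. -/
def Repetitive {A : Type*} (x : ℤ → A) : Prop :=
  ∀ ℓ : ℕ, ∃ L : ℕ, ∀ w : Fin ℓ → A, OccursIn w x →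
    ∀ n : ℤ, ∃ m : ℤ, n ≤ m ∧ m + ℓ ≤ n + L ∧ ∀ j : Fin ℓ, w j = x (m + (j : ℕ))

/-- The LI-class of `x`: all sequences `y` that are locally indistinguishable from `x`,
i.e. have exactly the same finite factors as `x`. -/
def LIClass {A : Type*} (x : ℤ → A) : Set (ℤ → A) :=
  {y | ∀ (ℓ : ℕ) (w : Fin ℓ → A), OccursIn w x ↔ OccursIn w y}

/-- The factor of `x` of length `ℓ` at position `n` is a palindrome:
`x (n + j) = x (n + ℓ - 1 - j)` for all `j < ℓ`. -/
def IsPalFactorAt {A : Type*} (x : ℤ → A) (ℓ : ℕ) (n : ℤ) : Prop :=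
  ∀ j : ℕ, j < ℓ → x (n + (j : ℕ)) = x (n + ((ℓ - 1 - j : ℕ) : ℤ))

/-- `x` is palindromic: it contains palindromic factors of arbitrarily large length. -/
def PalindromicZ {A : Type*} (x : ℤ → A) : Prop :=
  ∀ N : ℕ, ∃ ℓ : ℕ, N ≤ ℓ ∧ ∃ n : ℤ, IsPalFactorAt x ℓ n

/-- The centre `n + (ℓ - 1)/2` (as a real number) of a factor of length `ℓ` at
position `n`. -/
noncomputable def factorCentre (ℓ : ℕ) (n : ℤ) : ℝ := (n : ℝ) + ((ℓ : ℝ) - 1) / 2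

/-- `x` is strongly palindromic: there are `B > 0` and palindromic factors of lengths
`ℓ i` at positions `n i`, with centres `m i = n i + (ℓ i - 1)/2`, such that
`|m i| → ∞` and `exp (B * |m i|) / ℓ i → 0`. -/
def StronglyPalindromicZ {A : Type*} (x : ℤ → A) : Prop :=
  ∃ B : ℝ, 0 < B ∧ ∃ (ℓ : ℕ → ℕ) (n : ℕ → ℤ),
    (∀ i, IsPalFactorAt x (ℓ i) (n i)) ∧
    Filter.Tendsto (fun i => |factorCentre (ℓ i) (n i)|) Filter.atTop Filter.atTop ∧
    Filter.Tendsto (fun i => Real.exp (B * |factorCentre (ℓ i) (n i)|) / (ℓ i : ℝ))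
      Filter.atTop (nhds 0)

/-- The reversal `R` of a bi-infinite sequence: `(R x) n = x (-n)`. -/
def revZ {A : Type*} (x : ℤ → A) : ℤ → A := fun n => x (-n)



open Filter

/-- Combinatorial characterization of orbit-closure membership. -/
lemma mem_closure_shiftOrbit_iff {A : Type*} [TopologicalSpace A] [DiscreteTopology A]
    (x y : ℤ → A) :
    y ∈ closure (shiftOrbit x) ↔ ∀ F : Finset ℤ, ∃ k : ℤ, ∀ n ∈ F, y n = x (n + k) := by
  constructor
  · intro hy F
    have hopen : IsOpen {z : ℤ → A | ∀ n ∈ F, z n = y n} := by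
      have he : {z : ℤ → A | ∀ n ∈ F, z n = y n}
          = ⋂ n ∈ F, (fun z : ℤ → A => z n) ⁻¹' {y n} := by
        ext z; simp
      rw [he]
      exact isOpen_biInter_finset fun n _ =>
        (continuous_apply n).isOpen_preimage _ (isOpen_discrete _)
    obtain ⟨z, hzU, k, rfl⟩ := mem_closure_iff.mp hy _ hopen (fun n _ => rfl)
    exact ⟨k, fun n hn => (hzU n hn).symm⟩
  · intro h
    rw [mem_closure_iff]
    intro U hU hyU
    obtain ⟨I, u, hI, hsub⟩ := isOpen_pi_iff.mp hU y hyU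
    obtain ⟨k, hk⟩ := h I
    refine ⟨fun n => x (n + k), hsub ?_, k, rfl⟩
    intro n hn
    simpa [← hk n hn] using (hI n hn).2

/-- Orbit closures are shift invariant. -/
lemma shift_mem_closure_shiftOrbit {A : Type*} [TopologicalSpace A] [DiscreteTopology A]
    {x z : ℤ → A} (hz : z ∈ closure (shiftOrbit x)) (k : ℤ) :
    (fun n => z (n + k)) ∈ closure (shiftOrbit x) := by
  rw [mem_closure_shiftOrbit_iff] at hz ⊢
  intro F
  obtain ⟨k2, hk2⟩ := hz (F.image (· + k))
  refine ⟨k + k2, fun n hn => ?_⟩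
  have := hk2 (n + k) (Finset.mem_image_of_mem _ hn)
  rw [this]; ring_nf

/-- Factors of elements of the orbit closure of `x` are factors of `x`. -/
lemma occursIn_of_mem_closure {A : Type*} [TopologicalSpace A] [DiscreteTopology A]
    {x y : ℤ → A} (hy : y ∈ closure (shiftOrbit x)) {ℓ : ℕ} {w : Fin ℓ → A}
    (hw : OccursIn w y) : OccursIn w x := by
  obtain ⟨n, hn⟩ := hw
  obtain ⟨k, hk⟩ := (mem_closure_shiftOrbit_iff x y).mp hy
    ((Finset.range ℓ).image fun j : ℕ => n + (j : ℤ))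
  refine ⟨n + k, fun j => ?_⟩
  have hmem : n + ((j : ℕ) : ℤ) ∈ (Finset.range ℓ).image fun j : ℕ => n + (j : ℤ) :=
    Finset.mem_image_of_mem _ (Finset.mem_range.mpr j.2)
  rw [hn j, hk _ hmem]
  ring_nf

/-- Orbit closures are nested. -/
lemma closure_shiftOrbit_subset {A : Type*} [TopologicalSpace A] [DiscreteTopology A]
    {x y : ℤ → A} (hy : y ∈ closure (shiftOrbit x)) :
    closure (shiftOrbit y) ⊆ closure (shiftOrbit x) := by
  intro z hz
  rw [mem_closure_shiftOrbit_iff] at hy hz ⊢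
  intro F
  obtain ⟨k1, hk1⟩ := hz F
  obtain ⟨k2, hk2⟩ := hy (F.image (· + k1))
  refine ⟨k1 + k2, fun n hn => ?_⟩
  rw [hk1 n hn, hk2 (n + k1) (Finset.mem_image_of_mem _ hn)]
  ring_nf

lemma self_mem_closure_shiftOrbit {A : Type*} [TopologicalSpace A] (x : ℤ → A) :
    x ∈ closure (shiftOrbit x) :=
  subset_closure ⟨0, funext fun n => by simp⟩

/-- Gottschalk: a bi-infinite sequence over a finite (discrete) alphabet is repetitive
if and only if its shift-orbit closure (in the product topology) is minimal, i.e. every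
element of the orbit closure has the same orbit closure. -/
theorem repetitive_iff_minimal {A : Type*} [Fintype A] [TopologicalSpace A]
    [DiscreteTopology A] (x : ℤ → A) :
    Repetitive x ↔
      ∀ y ∈ closure (shiftOrbit x), closure (shiftOrbit y) = closure (shiftOrbit x) := by
  constructor
  · -- repetitive → minimal
    intro hrep y hy
    refine subset_antisymm (closure_shiftOrbit_subset hy) ?_
    have hx_mem : x ∈ closure (shiftOrbit y) := by
      rw [mem_closure_shiftOrbit_iff]
      intro F
      rcases F.eq_empty_or_nonempty with rfl | hFne
      · exact ⟨0, by simp⟩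
      set a := F.min' hFne with ha
      set b := F.max' hFne with hb
      have hab : a ≤ b := F.min'_le _ (F.max'_mem hFne)
      set ℓ : ℕ := (b - a + 1).toNat with hℓ
      have hℓint : (ℓ : ℤ) = b - a + 1 := Int.toNat_of_nonneg (by omega)
      obtain ⟨L, hL⟩ := hrep ℓ
      set w : Fin ℓ → A := fun j => x (a + (j : ℕ)) with hwdef
      have hw : OccursIn w x := ⟨a, fun j => rfl⟩
      obtain ⟨k0, hk0⟩ := (mem_closure_shiftOrbit_iff x y).mp hy
        ((Finset.range L).image fun j : ℕ => (j : ℤ))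
      have hk0' : ∀ m : ℤ, 0 ≤ m → m < L → y m = x (m + k0) := by
        intro m h0 hm
        refine hk0 m (Finset.mem_image.mpr ⟨m.toNat, Finset.mem_range.mpr ?_, ?_⟩) <;> omega
      obtain ⟨m, hm1, hm2, hm3⟩ := hL w hw k0
      refine ⟨m - a - k0, fun n hn => ?_⟩
      have hna : a ≤ n := F.min'_le n hn
      have hnb : n ≤ b := F.le_max' n hn
      have hj : (n - a).toNat < ℓ := by omega
      have hjz : ((⟨(n - a).toNat, hj⟩ : Fin ℓ) : ℕ) = (n - a).toNat := rfl
      have h1 : x n = x (m + ((n - a).toNat : ℕ)) := by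
        have := hm3 ⟨(n - a).toNat, hj⟩
        rw [hwdef] at this
        simp only [hjz] at this
        have hcast : ((n - a).toNat : ℤ) = n - a := Int.toNat_of_nonneg (by omega)
        rw [hcast] at this
        calc x n = x (a + (n - a)) := by ring_nf
        _ = x (m + (n - a)) := this
        _ = x (m + ((n - a).toNat : ℕ)) := by rw [hcast]
      have hcast : ((n - a).toNat : ℤ) = n - a := Int.toNat_of_nonneg (by omega)
      have h2 : y (n + (m - a - k0)) = x (n + (m - a - k0) + k0) := by
        refine hk0' _ (by omega) (by omega)
      rw [h2]
      rw [h1]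
      congr 1
      push_cast [hcast]
      ring
    have horb : shiftOrbit x ⊆ closure (shiftOrbit y) := by
      rintro z ⟨k, rfl⟩
      exact shift_mem_closure_shiftOrbit hx_mem k
    exact closure_minimal horb isClosed_closure
  · -- minimal → repetitive
    intro hmin
    by_contra hnrep
    rw [Repetitive] at hnrep
    push_neg at hnrep
    obtain ⟨ℓ, hbad⟩ := hnrep
    -- pick a single bad word by pigeonhole
    choose g hg1 n0 hg2 using hbad
    obtain ⟨w, hwfib⟩ := Finite.exists_infinite_fiber g
    have hwfib' : (g ⁻¹' {w}).Infinite := Set.infinite_coe_iff.mp hwfib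
    have hw_occ : OccursIn w x := by
      obtain ⟨L0, hL0⟩ := hwfib'.nonempty
      have hgw : g L0 = w := hL0
      exact hgw ▸ hg1 L0
    -- windows of arbitrary radius avoiding w
    have hwin : ∀ K : ℕ, ∃ c : ℤ, ∀ p : ℤ, c - K ≤ p → p ≤ c + K →
        ∃ j : Fin ℓ, w j ≠ x (p + (j : ℕ)) := by
      intro K
      obtain ⟨L, hLfib, hLgt⟩ := hwfib'.exists_gt (2 * K + ℓ)
      have hgw : g L = w := hLfib
      refine ⟨n0 L + K, fun p hp1 hp2 => ?_⟩
      have := hg2 L p (by omega) (by omega)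
      rwa [hgw] at this
    choose c hc using hwin
    -- build a limit point via an ultrafilter
    obtain ⟨u, hu⟩ := Ultrafilter.exists_le (atTop : Filter ℕ)
    have hpick : ∀ n : ℤ, ∃ a : A, {K : ℕ | x (n + c K) = a} ∈ u := by
      intro n
      have huniv : (⋃ a ∈ (Set.univ : Set A), {K : ℕ | x (n + c K) = a}) ∈ u := by
        have : (⋃ a ∈ (Set.univ : Set A), {K : ℕ | x (n + c K) = a}) = Set.univ := by
          ext K; simp
        rw [this]; exact Filter.univ_mem
      rw [Ultrafilter.finite_biUnion_mem_iff Set.finite_univ] at huniv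
      obtain ⟨a, -, ha⟩ := huniv
      exact ⟨a, ha⟩
    choose y hy using hpick
    have hy_cl : y ∈ closure (shiftOrbit x) := by
      rw [mem_closure_shiftOrbit_iff]
      intro F
      have hT : (⋂ n ∈ F, {K : ℕ | x (n + c K) = y n}) ∈ u :=
        (Filter.biInter_finset_mem F).mpr fun n _ => hy n
      obtain ⟨K, hK⟩ := Filter.nonempty_of_mem hT
      simp only [Set.mem_iInter, Set.mem_setOf_eq] at hK
      exact ⟨c K, fun n hn => (hK n hn).symm⟩
    have hw_not : ¬ OccursIn w y := by
      rintro ⟨p, hp⟩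
      have hS : (⋂ j : Fin ℓ, {K : ℕ | x (p + (j : ℕ) + c K) = y (p + (j : ℕ))}) ∈ u :=
        Filter.iInter_mem.mpr fun j => hy _
      have hbig : {K : ℕ | p.natAbs ≤ K} ∈ u := hu (Filter.mem_atTop p.natAbs)
      obtain ⟨K, hK⟩ := Filter.nonempty_of_mem (Filter.inter_mem hS hbig)
      obtain ⟨hK1, hK2⟩ := hK
      simp only [Set.mem_iInter, Set.mem_setOf_eq] at hK1
      simp only [Set.mem_setOf_eq] at hK2
      obtain ⟨j, hj⟩ := hc K (p + c K) (by omega) (by omega)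
      apply hj
      rw [hp j, ← hK1 j]
      congr 1
      ring
    -- contradiction with minimality
    have := hmin y hy_cl
    have hx_in : x ∈ closure (shiftOrbit y) := by
      rw [this]; exact self_mem_closure_shiftOrbit x
    exact hw_not (occursIn_of_mem_closure hx_in hw_occ)
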